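/- Let a, b ∈ Δₙ be strictly positive probability vectors, C ∈ ℝ₊^{n×n}, γ > 0, K := exp(−C/γ). Let (f_k, g_k) be the Sinkhorn iterates started from arbitrary f₀, g₀ ∈ ℝⁿ and let (f*, g*) be any dual optimal solution. Then for every k ≥ 3, h(f*, g*) − h(f_k, g_k) ≤ 2‖C‖_∞² / (γ(k − 2)). -/

import Mathlib

open Real Set

noncomputable def skF (t : ℝ) : ℝ := t * Real.log t - t + 1 - 3*(t-1)^2/(2*(t+2))
noncomputable def skG (t : ℝ) : ℝ := Real.log t - 3*(t-1)*(t+5)/(2*(t+2)^2)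

lemma skF_hasDeriv {t : ℝ} (ht : 0 < t) : HasDerivAt skF (skG t) t := by
  have h2 : (t + 2) ≠ 0 := by positivity
  have h1 : HasDerivAt (fun t : ℝ => t * Real.log t - t + 1) (Real.log t) t := by
    have := (hasDerivAt_id t).mul (Real.hasDerivAt_log ht.ne')
    have h := (this.sub (hasDerivAt_id t)).add_const 1
    refine h.congr_deriv ?_
    field_simp
    simp
  have h3 : HasDerivAt (fun t : ℝ => 3*(t-1)^2/(2*(t+2)))
      (3*(t-1)*(t+5)/(2*(t+2)^2)) t := by
    have hnum : HasDerivAt (fun t : ℝ => 3*(t-1)^2) (3*(2*(t-1))) t := by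
      have := ((hasDerivAt_id t).sub_const 1).pow 2
      simpa using this.const_mul 3
    have hden : HasDerivAt (fun t : ℝ => 2*(t+2)) 2 t := by
      simpa using ((hasDerivAt_id t).add_const 2).const_mul 2
    have := hnum.div hden (by positivity)
    refine this.congr_deriv ?_
    field_simp
    ring
  exact h1.sub h3

lemma skG_hasDeriv {t : ℝ} (ht : 0 < t) : HasDerivAt skG (1/t - 27/(t+2)^3) t := by
  have h2 : (t + 2) ≠ 0 := by positivity
  have hq : HasDerivAt (fun t : ℝ => 3*(t-1)*(t+5)/(2*(t+2)^2)) (27/(t+2)^3) t := by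
    have hnum : HasDerivAt (fun t : ℝ => 3*(t-1)*(t+5)) (3*(t-1) + 3*(t+5)) t := by
      have := (((hasDerivAt_id t).sub_const 1).const_mul 3).mul ((hasDerivAt_id t).add_const 5)
      refine this.congr_deriv ?_; simp; ring
    have hden : HasDerivAt (fun t : ℝ => 2*(t+2)^2) (2*(2*(t+2))) t := by
      have := (((hasDerivAt_id t).add_const 2).pow 2).const_mul 2
      refine this.congr_deriv ?_; simp
    have := hnum.div hden (by positivity)
    refine this.congr_deriv ?_
    field_simp
    ring
  have hlog := Real.hasDerivAt_log ht.ne'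
  have := hlog.sub hq
  refine this.congr_deriv ?_
  ring

lemma skG_nonneg_deriv {t : ℝ} (ht : 0 < t) : 0 ≤ 1/t - 27/(t+2)^3 := by
  rw [sub_nonneg, div_le_div_iff₀ (by positivity) ht]
  nlinarith [sq_nonneg (t-1), ht.le]

lemma skG_one : skG 1 = 0 := by simp [skG]

lemma skF_one : skF 1 = 0 := by norm_num [skF]

lemma skG_mono : MonotoneOn skG (Set.Ioi (0:ℝ)) := by
  have : interior (Set.Ioi (0:ℝ)) = Set.Ioi 0 := isOpen_Ioi.interior_eq
  refine monotoneOn_of_deriv_nonneg (convex_Ioi 0)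
    (fun t ht => ((skG_hasDeriv ht).continuousAt).continuousWithinAt)
    (fun t ht => ((skG_hasDeriv (by rw [this] at ht; exact ht)).differentiableAt).differentiableWithinAt)
    (fun t ht => ?_)
  rw [this] at ht
  rw [(skG_hasDeriv ht).deriv]
  exact skG_nonneg_deriv ht

lemma skF_nonneg {t : ℝ} (ht : 0 < t) : 0 ≤ skF t := by
  rcases le_or_gt 1 t with h | h
  · have hmono : MonotoneOn skF (Set.Ici (1:ℝ)) := by
      have hint : interior (Set.Ici (1:ℝ)) = Set.Ioi 1 := interior_Ici
      refine monotoneOn_of_deriv_nonneg (convex_Ici 1)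
        (fun s hs => ((skF_hasDeriv (lt_of_lt_of_le one_pos hs)).continuousAt).continuousWithinAt)
        (fun s hs => ?_) (fun s hs => ?_)
      · rw [hint] at hs
        exact ((skF_hasDeriv (lt_trans one_pos hs)).differentiableAt).differentiableWithinAt
      · rw [hint] at hs
        have hs0 : (0:ℝ) < s := lt_trans one_pos hs
        rw [(skF_hasDeriv hs0).deriv]
        have := skG_mono (Set.mem_Ioi.2 one_pos) (Set.mem_Ioi.2 hs0) hs.le
        rw [skG_one] at this
        exact this
    have := hmono (Set.mem_Ici.2 le_rfl) (Set.mem_Ici.2 h) h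
    rwa [skF_one] at this
  · have hanti : AntitoneOn skF (Set.Ioc (0:ℝ) 1) := by
      have hint : interior (Set.Ioc (0:ℝ) 1) = Set.Ioo 0 1 := interior_Ioc
      refine antitoneOn_of_deriv_nonpos (convex_Ioc 0 1)
        (fun s hs => ((skF_hasDeriv hs.1).continuousAt).continuousWithinAt)
        (fun s hs => ?_) (fun s hs => ?_)
      · rw [hint] at hs
        exact ((skF_hasDeriv hs.1).differentiableAt).differentiableWithinAt
      · rw [hint] at hs
        rw [(skF_hasDeriv hs.1).deriv]
        have := skG_mono (Set.mem_Ioi.2 hs.1) (Set.mem_Ioi.2 one_pos) hs.2.le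
        rw [skG_one] at this
        exact this
    have := hanti (Set.mem_Ioc.2 ⟨ht, h.le⟩) (Set.mem_Ioc.2 ⟨one_pos, le_rfl⟩) h.le
    rwa [skF_one] at this

/-- pointwise Pinsker ingredient -/
lemma pointwise_kl {x y : ℝ} (hx : 0 < x) (hy : 0 < y) :
    3*(x-y)^2/(2*(x+2*y)) ≤ x * Real.log (x/y) - x + y := by
  have ht : 0 < x / y := div_pos hx hy
  have h := skF_nonneg ht
  unfold skF at h
  rw [Real.log_div hx.ne' hy.ne'] at *
  have hy' : y ≠ 0 := hy.ne'
  have key : (x/y * (Real.log x - Real.log y) - x/y + 1 - 3*(x/y-1)^2/(2*(x/y+2))) * y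
      = x * (Real.log x - Real.log y) - x + y - 3*(x-y)^2/(2*(x+2*y)) := by
    field_simp
  nlinarith [mul_nonneg h hy.le]

/-- finite Pinsker -/
lemma pinsker_fin {n : ℕ} (a r : Fin n → ℝ) (ha0 : ∀ i, 0 < a i) (hr0 : ∀ i, 0 < r i)
    (ha1 : ∑ i, a i = 1) (hr1 : ∑ i, r i = 1) :
    (∑ i, |a i - r i|)^2 / 2 ≤ ∑ i, a i * Real.log (a i / r i) := by
  have hCS := Finset.sq_sum_div_le_sum_sq_div (Finset.univ : Finset (Fin n))
      (fun i => |a i - r i|) (g := fun i => a i + 2 * r i)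
      (fun i _ => by have := ha0 i; have := hr0 i; positivity)
  have hsum : ∑ i, (a i + 2 * r i) = 3 := by
    rw [Finset.sum_add_distrib, ha1, ← Finset.mul_sum, hr1]; norm_num
  rw [hsum] at hCS
  have hpt : ∀ i : Fin n, 3*(a i - r i)^2/(2*(a i + 2*r i)) ≤
      a i * Real.log (a i / r i) - a i + r i := fun i => pointwise_kl (ha0 i) (hr0 i)
  have h1 : ∑ i, (a i * Real.log (a i / r i) - a i + r i) =
      ∑ i, a i * Real.log (a i / r i) := by
    simp [Finset.sum_add_distrib, Finset.sum_sub_distrib, ha1, hr1]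
  have h2 : (∑ i, |a i - r i|)^2 / 2 ≤ ∑ i, 3*(a i - r i)^2/(2*(a i + 2*r i)) := by
    have : ∀ i : Fin n, 3*(a i - r i)^2/(2*(a i + 2*r i)) =
        (3/2) * (|a i - r i|^2 / (a i + 2*r i)) := by
      intro i
      rw [sq_abs]
      have hz : a i + 2 * r i ≠ 0 := by have := ha0 i; have := hr0 i; positivity
      field_simp
    rw [Finset.sum_congr rfl (fun i _ => this i), ← Finset.mul_sum]
    nlinarith [hCS]
  calc (∑ i, |a i - r i|)^2 / 2 ≤ ∑ i, 3*(a i - r i)^2/(2*(a i + 2*r i)) := h2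
    _ ≤ ∑ i, (a i * Real.log (a i / r i) - a i + r i) :=
        Finset.sum_le_sum (fun i _ => hpt i)
    _ = _ := h1

/-- The dual entropic OT objective
`h(f,g) = ⟨f,a⟩ + ⟨g,b⟩ − γ Σ_{i,j} exp((f_i + g_j − C_{ij})/γ)`. -/
noncomputable def dualObj {n : ℕ} (a b : Fin n → ℝ) (C : Matrix (Fin n) (Fin n) ℝ)
    (γ : ℝ) (f g : Fin n → ℝ) : ℝ :=
  (∑ i, f i * a i) + (∑ j, g j * b j) -
    γ * ∑ i, ∑ j, Real.exp ((f i + g j - C i j) / γ)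

/-- The transport plan `P = diag(e^{f/γ}) K diag(e^{g/γ})` with `K = exp(−C/γ)`. -/
noncomputable def plan {n : ℕ} (C : Matrix (Fin n) (Fin n) ℝ) (γ : ℝ)
    (f g : Fin n → ℝ) : Matrix (Fin n) (Fin n) ℝ :=
  fun i j => Real.exp (f i / γ) * Real.exp (-C i j / γ) * Real.exp (g j / γ)

/-- `(f k, g k)` is the sequence of Sinkhorn iterates (in dual form): for even `k`,
`f (k+1) = γ log a − γ log (K e^{g k / γ})` and `g (k+1) = g k`; for odd `k`,
`f (k+1) = f k` and `g (k+1) = γ log b − γ log (Kᵀ e^{f k / γ})`,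
where `K = exp(−C/γ)`. -/
def SinkhornSeq {n : ℕ} (a b : Fin n → ℝ) (C : Matrix (Fin n) (Fin n) ℝ) (γ : ℝ)
    (f g : ℕ → Fin n → ℝ) : Prop :=
  ∀ k : ℕ,
    (Even k →
      f (k+1) = (fun i => γ * Real.log (a i) -
        γ * Real.log (∑ j, Real.exp (-C i j / γ) * Real.exp (g k j / γ))) ∧
      g (k+1) = g k) ∧
    (¬ Even k →
      f (k+1) = f k ∧
      g (k+1) = (fun j => γ * Real.log (b j) -
        γ * Real.log (∑ i, Real.exp (-C i j / γ) * Real.exp (f k i / γ))))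

noncomputable def Srow {n : ℕ} (C : Matrix (Fin n) (Fin n) ℝ) (γ : ℝ)
    (g : Fin n → ℝ) (i : Fin n) : ℝ := ∑ j, Real.exp (-C i j / γ) * Real.exp (g j / γ)

noncomputable def Scol {n : ℕ} (C : Matrix (Fin n) (Fin n) ℝ) (γ : ℝ)
    (f : Fin n → ℝ) (j : Fin n) : ℝ := ∑ i, Real.exp (-C i j / γ) * Real.exp (f i / γ)

lemma plan_eq_exp {n : ℕ} {C : Matrix (Fin n) (Fin n) ℝ} {γ : ℝ} (hγ : γ ≠ 0)
    (f g : Fin n → ℝ) (i j : Fin n) :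
    plan C γ f g i j = Real.exp ((f i + g j - C i j) / γ) := by
  unfold plan
  rw [← Real.exp_add, ← Real.exp_add]
  congr 1
  field_simp
  ring

lemma plan_pos {n : ℕ} (C : Matrix (Fin n) (Fin n) ℝ) (γ : ℝ) (f g : Fin n → ℝ)
    (i j : Fin n) : 0 < plan C γ f g i j := by
  unfold plan; positivity

lemma row_sum {n : ℕ} (C : Matrix (Fin n) (Fin n) ℝ) (γ : ℝ) (f g : Fin n → ℝ) (i : Fin n) :
    ∑ j, plan C γ f g i j = Real.exp (f i / γ) * Srow C γ g i := by
  unfold plan Srow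
  rw [Finset.mul_sum]
  exact Finset.sum_congr rfl (fun j _ => by ring)

lemma col_sum {n : ℕ} (C : Matrix (Fin n) (Fin n) ℝ) (γ : ℝ) (f g : Fin n → ℝ) (j : Fin n) :
    ∑ i, plan C γ f g i j = Real.exp (g j / γ) * Scol C γ f j := by
  unfold plan Scol
  rw [Finset.mul_sum]
  exact Finset.sum_congr rfl (fun i _ => by ring)

lemma Srow_pos {n : ℕ} (hn : Nonempty (Fin n)) (C : Matrix (Fin n) (Fin n) ℝ) (γ : ℝ)
    (g : Fin n → ℝ) (i : Fin n) : 0 < Srow C γ g i :=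
  Finset.sum_pos (fun j _ => by positivity) Finset.univ_nonempty

lemma Scol_pos {n : ℕ} (hn : Nonempty (Fin n)) (C : Matrix (Fin n) (Fin n) ℝ) (γ : ℝ)
    (f : Fin n → ℝ) (j : Fin n) : 0 < Scol C γ f j :=
  Finset.sum_pos (fun i _ => by positivity) Finset.univ_nonempty

lemma update_row {n : ℕ} (hn : Nonempty (Fin n)) {C : Matrix (Fin n) (Fin n) ℝ} {γ : ℝ}
    (hγ : 0 < γ) {a : Fin n → ℝ} (ha0 : ∀ i, 0 < a i) (g : Fin n → ℝ) (i : Fin n) :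
    ∑ j, plan C γ (fun i' => γ * Real.log (a i') - γ * Real.log (Srow C γ g i')) g i j = a i := by
  rw [row_sum]
  have hS := Srow_pos hn C γ g i
  have : (γ * Real.log (a i) - γ * Real.log (Srow C γ g i)) / γ
      = Real.log (a i) - Real.log (Srow C γ g i) := by field_simp
  rw [this, Real.exp_sub, Real.exp_log (ha0 i), Real.exp_log hS]
  field_simp

lemma update_col {n : ℕ} (hn : Nonempty (Fin n)) {C : Matrix (Fin n) (Fin n) ℝ} {γ : ℝ}
    (hγ : 0 < γ) {b : Fin n → ℝ} (hb0 : ∀ j, 0 < b j) (f : Fin n → ℝ) (j : Fin n) :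
    ∑ i, plan C γ f (fun j' => γ * Real.log (b j') - γ * Real.log (Scol C γ f j')) i j = b j := by
  rw [col_sum]
  have hS := Scol_pos hn C γ f j
  have : (γ * Real.log (b j) - γ * Real.log (Scol C γ f j)) / γ
      = Real.log (b j) - Real.log (Scol C γ f j) := by field_simp
  rw [this, Real.exp_sub, Real.exp_log (hb0 j), Real.exp_log hS]
  field_simp

lemma exp_double_sum {n : ℕ} {C : Matrix (Fin n) (Fin n) ℝ} {γ : ℝ} (hγ : γ ≠ 0)
    (f g : Fin n → ℝ) :
    ∑ i, ∑ j, Real.exp ((f i + g j - C i j) / γ) = ∑ i, ∑ j, plan C γ f g i j :=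
  Finset.sum_congr rfl (fun i _ => Finset.sum_congr rfl
    (fun j _ => (plan_eq_exp hγ f g i j).symm))

lemma log_row_sum {n : ℕ} (hn : Nonempty (Fin n)) {C : Matrix (Fin n) (Fin n) ℝ} {γ : ℝ}
    (f g : Fin n → ℝ) (i : Fin n) :
    Real.log (∑ j, plan C γ f g i j) = f i / γ + Real.log (Srow C γ g i) := by
  rw [row_sum, Real.log_mul (Real.exp_ne_zero _) (Srow_pos hn C γ g i).ne', Real.log_exp]

lemma log_col_sum {n : ℕ} (hn : Nonempty (Fin n)) {C : Matrix (Fin n) (Fin n) ℝ} {γ : ℝ}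
    (f g : Fin n → ℝ) (j : Fin n) :
    Real.log (∑ i, plan C γ f g i j) = g j / γ + Real.log (Scol C γ f j) := by
  rw [col_sum, Real.log_mul (Real.exp_ne_zero _) (Scol_pos hn C γ f j).ne', Real.log_exp]

lemma improve_f {n : ℕ} (hn : Nonempty (Fin n)) {C : Matrix (Fin n) (Fin n) ℝ} {γ : ℝ}
    (hγ : 0 < γ) {a b : Fin n → ℝ} (ha0 : ∀ i, 0 < a i) (f g : Fin n → ℝ) :
    dualObj a b C γ (fun i => γ * Real.log (a i) - γ * Real.log (Srow C γ g i)) g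
      - dualObj a b C γ f g
    = γ * (∑ i, a i * Real.log (a i / (∑ j, plan C γ f g i j)))
      + γ * ((∑ i, ∑ j, plan C γ f g i j) - ∑ i, a i) := by
  set f' := fun i => γ * Real.log (a i) - γ * Real.log (Srow C γ g i) with hf'
  have hsum' : ∑ i, ∑ j, plan C γ f' g i j = ∑ i, a i :=
    Finset.sum_congr rfl (fun i _ => update_row hn hγ ha0 g i)
  have hterm : ∀ i, f' i * a i - f i * a i
      = γ * (a i * Real.log (a i / (∑ j, plan C γ f g i j))) := by
    intro i
    have hr : (0:ℝ) < ∑ j, plan C γ f g i j :=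
      Finset.sum_pos (fun j _ => plan_pos C γ f g i j) Finset.univ_nonempty
    rw [Real.log_div (ha0 i).ne' hr.ne', log_row_sum hn f g i]
    have : f i / γ * γ = f i := by field_simp
    simp only [hf']
    linear_combination (a i) * this
  have hsumterm : (∑ i, f' i * a i) - ∑ i, f i * a i
      = γ * (∑ i, a i * Real.log (a i / (∑ j, plan C γ f g i j))) := by
    rw [← Finset.sum_sub_distrib, Finset.mul_sum]
    exact Finset.sum_congr rfl (fun i _ => hterm i)
  unfold dualObj
  rw [exp_double_sum hγ.ne' f' g, exp_double_sum hγ.ne' f g, hsum']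
  linarith [hsumterm]

lemma improve_g {n : ℕ} (hn : Nonempty (Fin n)) {C : Matrix (Fin n) (Fin n) ℝ} {γ : ℝ}
    (hγ : 0 < γ) {a b : Fin n → ℝ} (hb0 : ∀ j, 0 < b j) (f g : Fin n → ℝ) :
    dualObj a b C γ f (fun j => γ * Real.log (b j) - γ * Real.log (Scol C γ f j))
      - dualObj a b C γ f g
    = γ * (∑ j, b j * Real.log (b j / (∑ i, plan C γ f g i j)))
      + γ * ((∑ i, ∑ j, plan C γ f g i j) - ∑ j, b j) := by
  set g' := fun j => γ * Real.log (b j) - γ * Real.log (Scol C γ f j) with hg'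
  have hsum' : ∑ i, ∑ j, plan C γ f g' i j = ∑ j, b j := by
    refine Finset.sum_comm.trans ?_
    exact Finset.sum_congr rfl (fun j _ => update_col hn hγ hb0 f j)
  have hM : ∑ i, ∑ j, plan C γ f g i j = ∑ j, ∑ i, plan C γ f g i j := by rw [Finset.sum_comm]
  have hterm : ∀ j, g' j * b j - g j * b j
      = γ * (b j * Real.log (b j / (∑ i, plan C γ f g i j))) := by
    intro j
    have hc : (0:ℝ) < ∑ i, plan C γ f g i j :=
      Finset.sum_pos (fun i _ => plan_pos C γ f g i j) Finset.univ_nonempty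
    rw [Real.log_div (hb0 j).ne' hc.ne', log_col_sum hn f g j]
    have : g j / γ * γ = g j := by field_simp
    simp only [hg']
    linear_combination (b j) * this
  have hsumterm : (∑ j, g' j * b j) - ∑ j, g j * b j
      = γ * (∑ j, b j * Real.log (b j / (∑ i, plan C γ f g i j))) := by
    rw [← Finset.sum_sub_distrib, Finset.mul_sum]
    exact Finset.sum_congr rfl (fun j _ => hterm j)
  unfold dualObj
  rw [exp_double_sum hγ.ne' f g', exp_double_sum hγ.ne' f g, hsum', hM]
  linarith [hsumterm]

lemma gap_le {n : ℕ} {C : Matrix (Fin n) (Fin n) ℝ} {γ : ℝ} (hγ : 0 < γ)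
    (a b fs gs f g : Fin n → ℝ) :
    dualObj a b C γ fs gs - dualObj a b C γ f g ≤
      (∑ i, (fs i - f i) * (a i - ∑ j, plan C γ f g i j))
      + ∑ j, (gs j - g j) * (b j - ∑ i, plan C γ f g i j) := by
  set u := fun i => fs i - f i with hu
  set v := fun j => gs j - g j with hv
  have hP : ∀ i j, plan C γ f g i j * (1 + (u i + v j)/γ) ≤ plan C γ fs gs i j := by
    intro i j
    have hpos := plan_pos C γ f g i j
    have hexp : plan C γ fs gs i j
        = plan C γ f g i j * Real.exp ((u i + v j)/γ) := by
      rw [plan_eq_exp hγ.ne', plan_eq_exp hγ.ne', ← Real.exp_add]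
      congr 1
      field_simp
      ring
    rw [hexp]
    have h1 := Real.add_one_le_exp ((u i + v j)/γ)
    nlinarith [hpos, h1]
  have hexpand : ∑ i, ∑ j, plan C γ f g i j * (1 + (u i + v j)/γ)
      = (∑ i, ∑ j, plan C γ f g i j)
        + (∑ i, u i * (∑ j, plan C γ f g i j))/γ
        + (∑ j, v j * (∑ i, plan C γ f g i j))/γ := by
    have hterm : ∀ i j, plan C γ f g i j * (1 + (u i + v j)/γ)
        = plan C γ f g i j + (plan C γ f g i j * u i)/γ + (plan C γ f g i j * v j)/γ := by
      intro i j; ring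
    calc ∑ i, ∑ j, plan C γ f g i j * (1 + (u i + v j)/γ)
        = ∑ i, ∑ j, (plan C γ f g i j + (plan C γ f g i j * u i)/γ
            + (plan C γ f g i j * v j)/γ) := by
          exact Finset.sum_congr rfl (fun i _ => Finset.sum_congr rfl (fun j _ => hterm i j))
      _ = (∑ i, ∑ j, plan C γ f g i j)
          + (∑ i, ∑ j, (plan C γ f g i j * u i)/γ)
          + (∑ i, ∑ j, (plan C γ f g i j * v j)/γ) := by
          simp [Finset.sum_add_distrib]
      _ = (∑ i, ∑ j, plan C γ f g i j)
        + (∑ i, u i * (∑ j, plan C γ f g i j))/γ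
        + (∑ j, v j * (∑ i, plan C γ f g i j))/γ := by
          have e1 : ∑ i, ∑ j, plan C γ f g i j * u i / γ
              = (∑ i, u i * (∑ j, plan C γ f g i j))/γ := by
            rw [Finset.sum_div]
            exact Finset.sum_congr rfl fun i _ => by
              rw [Finset.mul_sum, Finset.sum_div]
              exact Finset.sum_congr rfl fun j _ => by ring
          have e2 : ∑ i, ∑ j, plan C γ f g i j * v j / γ
              = (∑ j, v j * (∑ i, plan C γ f g i j))/γ := by
            rw [Finset.sum_comm, Finset.sum_div]
            exact Finset.sum_congr rfl fun j _ => by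
              rw [Finset.mul_sum, Finset.sum_div]
              exact Finset.sum_congr rfl fun i _ => by ring
          rw [e1, e2]
  have hsum : (∑ i, ∑ j, plan C γ f g i j)
        + (∑ i, u i * (∑ j, plan C γ f g i j))/γ
        + (∑ j, v j * (∑ i, plan C γ f g i j))/γ
      ≤ ∑ i, ∑ j, plan C γ fs gs i j := by
    rw [← hexpand]
    exact Finset.sum_le_sum (fun i _ => Finset.sum_le_sum (fun j _ => hP i j))
  set M := ∑ i, ∑ j, plan C γ f g i j with hM
  set A := ∑ i, ∑ j, plan C γ fs gs i j with hA
  set U := ∑ i, u i * (∑ j, plan C γ f g i j) with hU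
  set V := ∑ j, v j * (∑ i, plan C γ f g i j) with hV
  have hsum2 : U + V ≤ γ * A - γ * M := by
    have h2 : (U + V)/γ ≤ A - M := by rw [add_div]; linarith [hsum]
    calc U + V = γ * ((U + V)/γ) := by field_simp
      _ ≤ γ * (A - M) := by
          exact mul_le_mul_of_nonneg_left h2 hγ.le
      _ = γ * A - γ * M := by ring
  have hL : ∑ i, u i * (a i - ∑ j, plan C γ f g i j) = (∑ i, u i * a i) - U := by
    rw [hU, ← Finset.sum_sub_distrib]
    exact Finset.sum_congr rfl (fun i _ => by ring)
  have hR : ∑ j, v j * (b j - ∑ i, plan C γ f g i j) = (∑ j, v j * b j) - V := by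
    rw [hV, ← Finset.sum_sub_distrib]
    exact Finset.sum_congr rfl (fun j _ => by ring)
  have hfa : ∑ i, fs i * a i = (∑ i, f i * a i) + ∑ i, u i * a i := by
    rw [← Finset.sum_add_distrib]
    exact Finset.sum_congr rfl (fun i _ => by simp [hu]; ring)
  have hgb : ∑ j, gs j * b j = (∑ j, g j * b j) + ∑ j, v j * b j := by
    rw [← Finset.sum_add_distrib]
    exact Finset.sum_congr rfl (fun j _ => by simp [hv]; ring)
  unfold dualObj
  rw [exp_double_sum hγ.ne' fs gs, exp_double_sum hγ.ne' f g, ← hM, ← hA, hL, hR, hfa, hgb]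
  linarith

lemma log_sum_bounds {n : ℕ} (hn : Nonempty (Fin n)) {γ R : ℝ} (hγ : 0 < γ) (c e : Fin n → ℝ)
    (hc1 : ∀ x, c x ≤ 1) (hc2 : ∀ x, Real.exp (-R/γ) ≤ c x) (he : ∀ x, 0 < e x) :
    γ * Real.log (∑ x, e x) - R ≤ γ * Real.log (∑ x, c x * e x)
    ∧ γ * Real.log (∑ x, c x * e x) ≤ γ * Real.log (∑ x, e x) := by
  have hT : (0:ℝ) < ∑ x, e x := Finset.sum_pos (fun x _ => he x) Finset.univ_nonempty
  have hS : (0:ℝ) < ∑ x, c x * e x := by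
    refine Finset.sum_pos (fun x _ => mul_pos (lt_of_lt_of_le (Real.exp_pos _) (hc2 x)) (he x))
      Finset.univ_nonempty
  constructor
  · have hlow : Real.exp (-R/γ) * (∑ x, e x) ≤ ∑ x, c x * e x := by
      rw [Finset.mul_sum]
      exact Finset.sum_le_sum (fun x _ => mul_le_mul_of_nonneg_right (hc2 x) (he x).le)
    have := Real.log_le_log (by positivity) hlow
    rw [Real.log_mul (Real.exp_ne_zero _) hT.ne', Real.log_exp] at this
    have h2 : γ * (-R/γ + Real.log (∑ x, e x)) ≤ γ * Real.log (∑ x, c x * e x) :=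
      mul_le_mul_of_nonneg_left this hγ.le
    have h3 : γ * (-R/γ) = -R := by field_simp
    nlinarith [h2, h3]
  · have hhi : (∑ x, c x * e x) ≤ ∑ x, e x := by
      refine Finset.sum_le_sum (fun x _ => ?_)
      nlinarith [hc1 x, (he x).le, hc2 x, Real.exp_pos (-R/γ)]
    exact mul_le_mul_of_nonneg_left (Real.log_le_log hS hhi) hγ.le

lemma srow_dev {n : ℕ} (hn : Nonempty (Fin n)) {C : Matrix (Fin n) (Fin n) ℝ} {γ R : ℝ}
    (hγ : 0 < γ) (hC : ∀ i j, 0 ≤ C i j) (hRC : ∀ i j, C i j ≤ R) (g : Fin n → ℝ) (i : Fin n) :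
    -R ≤ γ * Real.log (Srow C γ g i) - γ * Real.log (∑ j, Real.exp (g j / γ))
    ∧ γ * Real.log (Srow C γ g i) - γ * Real.log (∑ j, Real.exp (g j / γ)) ≤ 0 := by
  have h := log_sum_bounds hn hγ (fun j => Real.exp (-C i j / γ)) (fun j => Real.exp (g j / γ))
    (fun j => Real.exp_le_one_iff.mpr (by
      have := hC i j
      have : -C i j ≤ 0 := by linarith
      exact div_nonpos_of_nonpos_of_nonneg this hγ.le))
    (fun j => Real.exp_le_exp.mpr (by
      have h1 := hRC i j
      gcongr))
    (fun j => Real.exp_pos _)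
  unfold Srow
  exact ⟨by linarith [h.1], by linarith [h.2]⟩

lemma scol_dev {n : ℕ} (hn : Nonempty (Fin n)) {C : Matrix (Fin n) (Fin n) ℝ} {γ R : ℝ}
    (hγ : 0 < γ) (hC : ∀ i j, 0 ≤ C i j) (hRC : ∀ i j, C i j ≤ R) (f : Fin n → ℝ) (j : Fin n) :
    -R ≤ γ * Real.log (Scol C γ f j) - γ * Real.log (∑ i, Real.exp (f i / γ))
    ∧ γ * Real.log (Scol C γ f j) - γ * Real.log (∑ i, Real.exp (f i / γ)) ≤ 0 := by
  have h := log_sum_bounds hn hγ (fun i => Real.exp (-C i j / γ)) (fun i => Real.exp (f i / γ))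
    (fun i => Real.exp_le_one_iff.mpr (by
      have := hC i j
      have : -C i j ≤ 0 := by linarith
      exact div_nonpos_of_nonpos_of_nonneg this hγ.le))
    (fun i => Real.exp_le_exp.mpr (by
      have h1 := hRC i j
      gcongr))
    (fun i => Real.exp_pos _)
  unfold Scol
  exact ⟨by linarith [h.1], by linarith [h.2]⟩

lemma gap_even {n : ℕ} (hn : Nonempty (Fin n)) {C : Matrix (Fin n) (Fin n) ℝ} {γ R : ℝ}
    (hγ : 0 < γ) (hC : ∀ i j, 0 ≤ C i j) (hRC : ∀ i j, C i j ≤ R)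
    (a b fs gs f g g' : Fin n → ℝ)
    (ha1 : ∑ i, a i = 1) (hb1 : ∑ j, b j = 1)
    (hf : ∀ i, f i = γ * Real.log (a i) - γ * Real.log (Srow C γ g' i))
    (hfseq : ∀ i, fs i = γ * Real.log (a i) - γ * Real.log (Srow C γ gs i))
    (hcol : ∀ j, ∑ i, plan C γ f g i j = b j) :
    dualObj a b C γ fs gs - dualObj a b C γ f g
      ≤ R * ∑ i, |a i - ∑ j, plan C γ f g i j| := by
  have hgap := gap_le (C := C) hγ a b fs gs f g
  have hzero : ∑ j, (gs j - g j) * (b j - ∑ i, plan C γ f g i j) = 0 := by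
    refine Finset.sum_eq_zero (fun j _ => ?_)
    rw [hcol j]
    ring
  rw [hzero, add_zero] at hgap
  refine hgap.trans ?_
  set c0 := (γ * Real.log (∑ j, Real.exp (g' j / γ)))
    - (γ * Real.log (∑ j, Real.exp (gs j / γ))) with hc0
  have hsum0 : ∑ i, (a i - ∑ j, plan C γ f g i j) = 0 := by
    rw [Finset.sum_sub_distrib, ha1, show (∑ x, ∑ j, plan C γ f g x j) = ∑ j, ∑ i, plan C γ f g i j from Finset.sum_comm]
    have : ∑ j, ∑ i, plan C γ f g i j = ∑ j, b j :=
      Finset.sum_congr rfl (fun j _ => hcol j)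
    rw [this, hb1, sub_self]
  have hvar : ∀ i, |(fs i - f i) - c0| ≤ R := by
    intro i
    have h1 := srow_dev hn hγ hC hRC g' i
    have h2 := srow_dev hn hγ hC hRC gs i
    have hdiff : (fs i - f i) - c0
        = (γ * Real.log (Srow C γ g' i) - γ * Real.log (∑ j, Real.exp (g' j / γ)))
          - (γ * Real.log (Srow C γ gs i) - γ * Real.log (∑ j, Real.exp (gs j / γ))) := by
      rw [hf i, hfseq i, hc0]
      ring
    rw [hdiff]
    rw [abs_le]
    exact ⟨by linarith [h1.1, h2.2], by linarith [h1.2, h2.1]⟩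
  have hsplit : ∑ i, (fs i - f i) * (a i - ∑ j, plan C γ f g i j)
      = ∑ i, ((fs i - f i) - c0) * (a i - ∑ j, plan C γ f g i j) := by
    have : ∀ i, (fs i - f i) * (a i - ∑ j, plan C γ f g i j)
        = ((fs i - f i) - c0) * (a i - ∑ j, plan C γ f g i j)
          + c0 * (a i - ∑ j, plan C γ f g i j) := fun i => by ring
    rw [Finset.sum_congr rfl (fun i _ => this i), Finset.sum_add_distrib,
      ← Finset.mul_sum, hsum0, mul_zero, add_zero]
  rw [hsplit, Finset.mul_sum]
  refine Finset.sum_le_sum (fun i _ => ?_)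
  calc ((fs i - f i) - c0) * (a i - ∑ j, plan C γ f g i j)
      ≤ |((fs i - f i) - c0) * (a i - ∑ j, plan C γ f g i j)| := le_abs_self _
    _ = |(fs i - f i) - c0| * |a i - ∑ j, plan C γ f g i j| := abs_mul _ _
    _ ≤ R * |a i - ∑ j, plan C γ f g i j| :=
        mul_le_mul_of_nonneg_right (hvar i) (abs_nonneg _)

lemma gap_odd {n : ℕ} (hn : Nonempty (Fin n)) {C : Matrix (Fin n) (Fin n) ℝ} {γ R : ℝ}
    (hγ : 0 < γ) (hC : ∀ i j, 0 ≤ C i j) (hRC : ∀ i j, C i j ≤ R)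
    (a b fs gs f g f' : Fin n → ℝ)
    (ha1 : ∑ i, a i = 1) (hb1 : ∑ j, b j = 1)
    (hg : ∀ j, g j = γ * Real.log (b j) - γ * Real.log (Scol C γ f' j))
    (hgseq : ∀ j, gs j = γ * Real.log (b j) - γ * Real.log (Scol C γ fs j))
    (hrow : ∀ i, ∑ j, plan C γ f g i j = a i) :
    dualObj a b C γ fs gs - dualObj a b C γ f g
      ≤ R * ∑ j, |b j - ∑ i, plan C γ f g i j| := by
  have hgap := gap_le (C := C) hγ a b fs gs f g
  have hzero : ∑ i, (fs i - f i) * (a i - ∑ j, plan C γ f g i j) = 0 := by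
    refine Finset.sum_eq_zero (fun i _ => ?_)
    rw [hrow i]
    ring
  rw [hzero, zero_add] at hgap
  refine hgap.trans ?_
  set c0 := (γ * Real.log (∑ i, Real.exp (f' i / γ)))
    - (γ * Real.log (∑ i, Real.exp (fs i / γ))) with hc0
  have hsum0 : ∑ j, (b j - ∑ i, plan C γ f g i j) = 0 := by
    rw [Finset.sum_sub_distrib, hb1, Finset.sum_comm]
    have : ∑ i, ∑ j, plan C γ f g i j = ∑ i, a i :=
      Finset.sum_congr rfl (fun i _ => hrow i)
    rw [this, ha1, sub_self]
  have hvar : ∀ j, |(gs j - g j) - c0| ≤ R := by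
    intro j
    have h1 := scol_dev hn hγ hC hRC f' j
    have h2 := scol_dev hn hγ hC hRC fs j
    have hdiff : (gs j - g j) - c0
        = (γ * Real.log (Scol C γ f' j) - γ * Real.log (∑ i, Real.exp (f' i / γ)))
          - (γ * Real.log (Scol C γ fs j) - γ * Real.log (∑ i, Real.exp (fs i / γ))) := by
      rw [hg j, hgseq j, hc0]
      ring
    rw [hdiff]
    rw [abs_le]
    exact ⟨by linarith [h1.1, h2.2], by linarith [h1.2, h2.1]⟩
  have hsplit : ∑ j, (gs j - g j) * (b j - ∑ i, plan C γ f g i j)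
      = ∑ j, ((gs j - g j) - c0) * (b j - ∑ i, plan C γ f g i j) := by
    have : ∀ j, (gs j - g j) * (b j - ∑ i, plan C γ f g i j)
        = ((gs j - g j) - c0) * (b j - ∑ i, plan C γ f g i j)
          + c0 * (b j - ∑ i, plan C γ f g i j) := fun j => by ring
    rw [Finset.sum_congr rfl (fun j _ => this j), Finset.sum_add_distrib,
      ← Finset.mul_sum, hsum0, mul_zero, add_zero]
  rw [hsplit, Finset.mul_sum]
  refine Finset.sum_le_sum (fun j _ => ?_)
  calc ((gs j - g j) - c0) * (b j - ∑ i, plan C γ f g i j)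
      ≤ |((gs j - g j) - c0) * (b j - ∑ i, plan C γ f g i j)| := le_abs_self _
    _ = |(gs j - g j) - c0| * |b j - ∑ i, plan C γ f g i j| := abs_mul _ _
    _ ≤ R * |b j - ∑ i, plan C γ f g i j| :=
        mul_le_mul_of_nonneg_right (hvar j) (abs_nonneg _)

lemma dual_opt_f_form {n : ℕ} (hn : Nonempty (Fin n)) {C : Matrix (Fin n) (Fin n) ℝ} {γ : ℝ}
    (hγ : 0 < γ) {a : Fin n → ℝ} (fs gs : Fin n → ℝ)
    (hfs : ∀ i, ∑ j, plan C γ fs gs i j = a i) (i : Fin n) :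
    fs i = γ * Real.log (a i) - γ * Real.log (Srow C γ gs i) := by
  have h := log_row_sum hn (C:=C) (γ:=γ) fs gs i
  rw [hfs i] at h
  have h2 : γ * (fs i / γ + Real.log (Srow C γ gs i)) = fs i + γ * Real.log (Srow C γ gs i) := by
    field_simp
  rw [h] at *
  nlinarith [h2]

lemma dual_opt_g_form {n : ℕ} (hn : Nonempty (Fin n)) {C : Matrix (Fin n) (Fin n) ℝ} {γ : ℝ}
    (hγ : 0 < γ) {b : Fin n → ℝ} (fs gs : Fin n → ℝ)
    (hgs : ∀ j, ∑ i, plan C γ fs gs i j = b j) (j : Fin n) :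
    gs j = γ * Real.log (b j) - γ * Real.log (Scol C γ fs j) := by
  have h := log_col_sum hn (C:=C) (γ:=γ) fs gs j
  rw [hgs j] at h
  have h2 : γ * (gs j / γ + Real.log (Scol C γ fs j)) = gs j + γ * Real.log (Scol C γ fs j) := by
    field_simp
  rw [h] at *
  nlinarith [h2]

lemma key_step {n : ℕ} (hn : Nonempty (Fin n)) {C : Matrix (Fin n) (Fin n) ℝ} {γ R : ℝ}
    (hγ : 0 < γ) (hC : ∀ i j, 0 ≤ C i j) (hRC : ∀ i j, C i j ≤ R)
    {a b : Fin n → ℝ} (ha0 : ∀ i, 0 < a i) (hb0 : ∀ j, 0 < b j)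
    (ha1 : ∑ i, a i = 1) (hb1 : ∑ j, b j = 1)
    (f g : ℕ → Fin n → ℝ) (hiter : SinkhornSeq a b C γ f g)
    (fs gs : Fin n → ℝ)
    (hfs : ∀ i, ∑ j, plan C γ fs gs i j = a i)
    (hgs : ∀ j, ∑ i, plan C γ fs gs i j = b j)
    (j : ℕ) (hj : 2 ≤ j) :
    ∃ t : ℝ, 0 ≤ t ∧
      dualObj a b C γ fs gs - dualObj a b C γ (f j) (g j) ≤ R * t ∧
      γ/2 * t^2 ≤ dualObj a b C γ (f (j+1)) (g (j+1)) - dualObj a b C γ (f j) (g j) := by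
  obtain ⟨m, rfl⟩ : ∃ m, j = m + 2 := ⟨j - 2, by omega⟩
  rcases Nat.even_or_odd (m+2) with hev | hodd
  · -- even case: f-update at step m+2
    have hm : Even m := by rw [Nat.even_iff] at *; omega
    have hm1 : ¬ Even (m+1) := by rw [Nat.even_iff] at *; omega
    have h0 := (hiter m).1 hm
    have h1 := (hiter (m+1)).2 hm1
    have h2 := (hiter (m+2)).1 hev
    have hfj : ∀ i, f (m+2) i = γ * Real.log (a i) - γ * Real.log (Srow C γ (g m) i) := by
      intro i
      rw [h1.1, h0.1]
      rfl
    have hgj : g (m+2) = fun j' => γ * Real.log (b j') - γ * Real.log (Scol C γ (f (m+2)) j') := by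
      rw [h1.2, h1.1]
      rfl
    have hcol : ∀ j', ∑ i, plan C γ (f (m+2)) (g (m+2)) i j' = b j' := by
      intro j'
      rw [hgj]
      exact update_col hn hγ hb0 (f (m+2)) j'
    set r := fun i => ∑ j', plan C γ (f (m+2)) (g (m+2)) i j' with hr
    have hr0 : ∀ i, 0 < r i := fun i =>
      Finset.sum_pos (fun j' _ => plan_pos _ _ _ _ _ _) Finset.univ_nonempty
    have hM : ∑ i, ∑ j', plan C γ (f (m+2)) (g (m+2)) i j' = 1 := by
      refine Finset.sum_comm.trans ?_
      rw [Finset.sum_congr rfl (fun j' _ => hcol j')]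
      exact hb1
    have hr1 : ∑ i, r i = 1 := hM
    refine ⟨∑ i, |a i - r i|, Finset.sum_nonneg (fun i _ => abs_nonneg _), ?_, ?_⟩
    · refine gap_even hn hγ hC hRC a b fs gs (f (m+2)) (g (m+2)) (g m) ha1 hb1 hfj
        (dual_opt_f_form hn hγ fs gs hfs) hcol
    · have himp := improve_f hn (C:=C) hγ (b := b) ha0 (f (m+2)) (g (m+2))
      have hfeq : f (m+2+1) = fun i => γ * Real.log (a i) - γ * Real.log (Srow C γ (g (m+2)) i) := by
        rw [h2.1]
        rfl
      rw [← hfeq] at himp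
      rw [h2.2, himp, hM, ha1, sub_self, mul_zero, add_zero]
      have hpk := pinsker_fin a r ha0 hr0 ha1 hr1
      have : γ/2 * (∑ i, |a i - r i|)^2 = γ * ((∑ i, |a i - r i|)^2 / 2) := by ring
      rw [this]
      exact mul_le_mul_of_nonneg_left hpk hγ.le
  · -- odd case: g-update at step m+2
    have hev2 : ¬ Even (m+2) := Nat.not_even_iff_odd.mpr hodd
    have hm : ¬ Even m := by rw [Nat.even_iff] at *; rw [Nat.odd_iff] at hodd; omega
    have hm1 : Even (m+1) := by rw [Nat.even_iff] at *; rw [Nat.odd_iff] at hodd; omega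
    have h0 := (hiter m).2 hm
    have h1 := (hiter (m+1)).1 hm1
    have h2 := (hiter (m+2)).2 hev2
    have hgj : ∀ j', g (m+2) j' = γ * Real.log (b j') - γ * Real.log (Scol C γ (f m) j') := by
      intro j'
      rw [h1.2, h0.2]
      rfl
    have hfj : f (m+2) = fun i => γ * Real.log (a i) - γ * Real.log (Srow C γ (g (m+2)) i) := by
      rw [h1.1, h1.2]
      rfl
    have hrow : ∀ i, ∑ j', plan C γ (f (m+2)) (g (m+2)) i j' = a i := by
      intro i
      rw [hfj]
      exact update_row hn hγ ha0 (g (m+2)) i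
    set c := fun j' => ∑ i, plan C γ (f (m+2)) (g (m+2)) i j' with hc
    have hc0 : ∀ j', 0 < c j' := fun j' =>
      Finset.sum_pos (fun i _ => plan_pos _ _ _ _ _ _) Finset.univ_nonempty
    have hM : ∑ i, ∑ j', plan C γ (f (m+2)) (g (m+2)) i j' = 1 := by
      rw [Finset.sum_congr rfl (fun i _ => hrow i)]
      exact ha1
    have hc1 : ∑ j', c j' = 1 := by
      rw [hc]
      refine Finset.sum_comm.trans ?_
      exact hM
    refine ⟨∑ j', |b j' - c j'|, Finset.sum_nonneg (fun j' _ => abs_nonneg _), ?_, ?_⟩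
    · refine gap_odd hn hγ hC hRC a b fs gs (f (m+2)) (g (m+2)) (f m) ha1 hb1 hgj
        (dual_opt_g_form hn hγ fs gs hgs) hrow
    · have himp := improve_g hn (C:=C) hγ (a := a) hb0 (f (m+2)) (g (m+2))
      have hgeq : g (m+2+1) = fun j' => γ * Real.log (b j') - γ * Real.log (Scol C γ (f (m+2)) j') := by
        rw [h2.2]
        rfl
      rw [← hgeq] at himp
      rw [h2.1, himp, hM, hb1, sub_self, mul_zero, add_zero]
      have hpk := pinsker_fin b c hb0 hc0 hb1 hc1
      have : γ/2 * (∑ j', |b j' - c j'|)^2 = γ * ((∑ j', |b j' - c j'|)^2 / 2) := by ring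
      rw [this]
      exact mul_le_mul_of_nonneg_left hpk hγ.le

/-- **Sublinear convergence of the dual gap for Sinkhorn**: for `k ≥ 3` and any
dual optimal solution `(f*, g*)`,
`h(f*,g*) − h(f_k,g_k) ≤ 2‖C‖_∞² / (γ(k − 2))`. -/
theorem sinkhorn_dual_gap_rate {n : ℕ} (a b : Fin n → ℝ)
    (C : Matrix (Fin n) (Fin n) ℝ) (γ : ℝ) (hγ : 0 < γ)
    (ha0 : ∀ i, 0 < a i) (hb0 : ∀ j, 0 < b j)
    (ha1 : ∑ i, a i = 1) (hb1 : ∑ j, b j = 1)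
    (hC : ∀ i j, 0 ≤ C i j)
    (f g : ℕ → Fin n → ℝ) (hiter : SinkhornSeq a b C γ f g)
    (fs gs : Fin n → ℝ)
    (hfs : ∀ i, ∑ j, plan C γ fs gs i j = a i)
    (hgs : ∀ j, ∑ i, plan C γ fs gs i j = b j)
    (k : ℕ) (hk : 3 ≤ k) :
    dualObj a b C γ fs gs - dualObj a b C γ (f k) (g k) ≤
      2 * (⨆ i, ⨆ j, |C i j|) ^ 2 / (γ * ((k : ℝ) - 2)) := by
  have hn : Nonempty (Fin n) := by
    cases n with
    | zero => simp at ha1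
    | succ m => exact ⟨0⟩
  set R := ⨆ i, ⨆ j, |C i j| with hRdef
  have hbdd : ∀ i : Fin n, BddAbove (Set.range (fun j => |C i j|)) :=
    fun i => Set.Finite.bddAbove (Set.finite_range _)
  have hbdd2 : BddAbove (Set.range (fun i => ⨆ j, |C i j|)) :=
    Set.Finite.bddAbove (Set.finite_range _)
  have hRC : ∀ i j, C i j ≤ R := by
    intro i j
    calc C i j = |C i j| := (abs_of_nonneg (hC i j)).symm
      _ ≤ ⨆ j', |C i j'| := le_ciSup (hbdd i) j
      _ ≤ R := le_ciSup hbdd2 i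
  obtain ⟨i0⟩ := hn
  have hn : Nonempty (Fin n) := ⟨i0⟩
  have hR0 : 0 ≤ R :=
    le_trans (abs_nonneg (C i0 i0)) (le_trans (le_ciSup (hbdd i0) i0) (le_ciSup hbdd2 i0))
  set δ : ℕ → ℝ := fun m => dualObj a b C γ fs gs - dualObj a b C γ (f m) (g m) with hδdef
  have hδm : ∀ m, δ m = dualObj a b C γ fs gs - dualObj a b C γ (f m) (g m) := fun m => rfl
  have hks : ∀ j : ℕ, 2 ≤ j → ∃ t : ℝ, 0 ≤ t ∧ δ j ≤ R * t ∧
      γ/2 * t^2 ≤ δ j - δ (j+1) := by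
    intro j hj
    obtain ⟨t, ht0, h2, h3⟩ :=
      key_step hn hγ hC hRC ha0 hb0 ha1 hb1 f g hiter fs gs hfs hgs j hj
    refine ⟨t, ht0, by rw [hδm]; exact h2, ?_⟩
    rw [hδm, hδm]
    linarith [h3]
  clear_value R δ
  have hmono : ∀ j, 2 ≤ j → δ (j+1) ≤ δ j := by
    intro j hj
    obtain ⟨t, ht0, _, h3⟩ := hks j hj
    nlinarith [h3, mul_nonneg (by positivity : (0:ℝ) ≤ γ/2) (sq_nonneg t)]
  have hchain : ∀ p q, 2 ≤ p → p ≤ q → δ q ≤ δ p := by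
    intro p q hp hpq
    induction q, hpq using Nat.le_induction with
    | base => exact le_rfl
    | succ q hq ih => exact le_trans (hmono q (le_trans hp hq)) ih
  rcases le_or_gt (δ k) 0 with hneg | hpos
  · have hk3 : (3:ℝ) ≤ (k:ℝ) := by exact_mod_cast hk
    have hrhs : (0:ℝ) ≤ 2 * R^2 / (γ * ((k:ℝ) - 2)) := by
      apply div_nonneg
      · positivity
      · nlinarith [hγ]
    calc dualObj a b C γ fs gs - dualObj a b C γ (f k) (g k) = δ k := (hδm k).symm
      _ ≤ 0 := hneg
      _ ≤ _ := hrhs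
  · have hk2 : 2 ≤ k := by omega
    have hRpos : 0 < R := by
      rcases hks k hk2 with ⟨t, ht0, h2, _⟩
      rcases lt_or_eq_of_le hR0 with h | h
      · exact h
      · exfalso
        nlinarith [hpos, h2, ht0]
    have hposall : ∀ m, 2 ≤ m → m ≤ k → 0 < δ m :=
      fun m h1 h2 => lt_of_lt_of_le hpos (hchain m k h1 h2)
    have hrec : ∀ m, 2 ≤ m → m ≤ k → γ * ((m:ℝ) - 2) / (2*R^2) ≤ 1/δ m := by
      intro m hm
      induction m, hm using Nat.le_induction with
      | base =>
        intro h2k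
        have hd2 := hposall 2 le_rfl h2k
        have h0 : γ * (((2:ℕ):ℝ) - 2) / (2*R^2) = 0 := by norm_num
        rw [h0]
        positivity
      | succ m hm ih =>
        intro hmk1
        have hmk : m ≤ k := by omega
        have ih' := ih hmk
        obtain ⟨t, ht0, h2, h3⟩ := hks m hm
        have hdm := hposall m hm hmk
        have hdm1 := hposall (m+1) (by omega) hmk1
        have hmono' : δ (m+1) ≤ δ m := hmono m hm
        have hsq : δ m^2 ≤ R^2 * t^2 := by nlinarith [h2, hdm, ht0, hRpos]
        have himp : γ * δ m^2 ≤ 2*R^2*(δ m - δ (m+1)) := by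
          have hA := mul_le_mul_of_nonneg_left hsq hγ.le
          have hB := mul_le_mul_of_nonneg_left h3 (by positivity : (0:ℝ) ≤ 2*R^2)
          have hE : γ*(R^2*t^2) = 2*R^2*(γ/2*t^2) := by ring
          linarith
        have hstep : 1/δ m + γ/(2*R^2) ≤ 1/δ (m+1) := by
          rw [div_add_div _ _ (ne_of_gt hdm) (by positivity),
            div_le_div_iff₀ (by positivity) hdm1]
          have hP : γ * δ m * δ (m+1) ≤ γ * δ m * δ m :=
            mul_le_mul_of_nonneg_left hmono' (mul_nonneg hγ.le hdm.le)
          nlinarith [himp, hP]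
        have hcast : ((m+1:ℕ):ℝ) - 2 = ((m:ℕ):ℝ) - 2 + 1 := by push_cast; ring
        rw [hcast]
        have heq : γ * (((m:ℕ):ℝ) - 2 + 1)/(2*R^2)
            = γ*(((m:ℕ):ℝ)-2)/(2*R^2) + γ/(2*R^2) := by ring
        rw [heq]
        linarith [ih', hstep]
    have hfinal := hrec k hk2 le_rfl
    have hk3 : (3:ℝ) ≤ (k:ℝ) := by exact_mod_cast hk
    have hkr : (0:ℝ) < (k:ℝ) - 2 := by linarith
    have h1 : δ k * (γ * ((k:ℝ)-2)/(2*R^2)) ≤ δ k * (1/δ k) :=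
      mul_le_mul_of_nonneg_left hfinal hpos.le
    have h2 : δ k * (1/δ k) = 1 := by field_simp
    have hgoal : δ k ≤ 2 * R^2 / (γ * ((k:ℝ) - 2)) := by
      rw [le_div_iff₀ (by positivity)]
      have h3 : δ k * (γ*((k:ℝ)-2)/(2*R^2)) = δ k * (γ*((k:ℝ)-2))/(2*R^2) := by ring
      have h4 : δ k * (γ*((k:ℝ)-2))/(2*R^2) ≤ 1 := by linarith
      have h5 := mul_le_mul_of_nonneg_left h4 (by positivity : (0:ℝ) ≤ 2*R^2)
      have h6 : 2*R^2 * (δ k * (γ*((k:ℝ)-2))/(2*R^2)) = δ k * (γ*((k:ℝ)-2)) := by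
        field_simp
      linarith
    calc dualObj a b C γ fs gs - dualObj a b C γ (f k) (g k) = δ k := (hδm k).symm
      _ ≤ _ := hgoal
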